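/- If g : ℕ → ℝ is positive with g(n) → 0 as n → ∞, and there exists a constant c such that the interval (n, n + g(n)√n) contains a prime for every integer n ≥ c, then √(p_{m+1}) - √(p_m) → 0 as m → ∞, where p_m denotes the m-th prime. -/
import Mathlib

theorem stmt3 (g : ℕ → ℝ) (hg : ∀ n : ℕ, 0 < g n)
    (hg0 : Filter.Tendsto g Filter.atTop (nhds 0))
    (h : ∃ c : ℕ, ∀ n : ℕ, c ≤ n →
      ∃ m : ℕ, m.Prime ∧ (n : ℝ) < m ∧ (m : ℝ) < n + g n * Real.sqrt n) :
    Filter.Tendsto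
      (fun m : ℕ => Real.sqrt (Nat.nth Nat.Prime (m + 1)) - Real.sqrt (Nat.nth Nat.Prime m))
      Filter.atTop (nhds 0) := by
  obtain ⟨c, hc⟩ := h
  have hinf : (setOf Nat.Prime).Infinite := Nat.infinite_setOf_prime
  have hnth : Filter.Tendsto (Nat.nth Nat.Prime) Filter.atTop Filter.atTop :=
    Filter.tendsto_atTop_mono (fun m => Nat.le_nth (fun hf => absurd hf hinf))
      Filter.tendsto_id
  have hgp : Filter.Tendsto (fun m => g (Nat.nth Nat.Prime m)) Filter.atTop (nhds 0) :=
    hg0.comp hnth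
  apply squeeze_zero' ?_ ?_ hgp
  · filter_upwards with m
    have : (Nat.nth Nat.Prime m : ℝ) ≤ Nat.nth Nat.Prime (m + 1) := by
      exact_mod_cast (Nat.nth_monotone hinf (Nat.le_succ m))
    linarith [Real.sqrt_le_sqrt this]
  · have : ∀ᶠ m : ℕ in Filter.atTop, c ≤ Nat.nth Nat.Prime m := hnth.eventually_ge_atTop c
    filter_upwards [this] with m hm
    set n := Nat.nth Nat.Prime m with hn
    obtain ⟨q, hq, hq1, hq2⟩ := hc n hm
    have hnq : n < q := by exact_mod_cast hq1
    have hle : Nat.nth Nat.Prime (m + 1) ≤ q := by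
      by_contra hlt
      push_neg at hlt
      exact absurd (Nat.le_nth_of_lt_nth_succ hlt hq) (not_le.mpr hnq)
    have h2 : (Nat.nth Nat.Prime (m + 1) : ℝ) < n + g n * Real.sqrt n := by
      calc (Nat.nth Nat.Prime (m + 1) : ℝ) ≤ q := by exact_mod_cast hle
        _ < n + g n * Real.sqrt n := hq2
    have hnn : (0:ℝ) ≤ (n:ℝ) := Nat.cast_nonneg n
    have hsq : Real.sqrt n ^ 2 = (n:ℝ) := Real.sq_sqrt hnn
    have hkey : (n:ℝ) + g n * Real.sqrt n ≤ (Real.sqrt n + g n) ^ 2 := by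
      nlinarith [Real.sqrt_nonneg (n:ℝ), (hg n).le]
    have hs : Real.sqrt (Nat.nth Nat.Prime (m + 1)) ≤ Real.sqrt n + g n := by
      calc Real.sqrt (Nat.nth Nat.Prime (m + 1)) ≤ Real.sqrt ((Real.sqrt n + g n) ^ 2) :=
            Real.sqrt_le_sqrt (h2.le.trans hkey)
        _ = Real.sqrt n + g n := Real.sqrt_sq (by have := Real.sqrt_nonneg (n:ℝ); linarith [(hg n).le])
    linarith
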